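/- Fix an integer s ≥ 1, integers ν_1,…,ν_s ≥ 0, an integer p ≥ 0, and reals y > 0, c > 0. Then ∑_{j=0}^{p} [(−p)_j / ((ν_1+1)_j j!)] · (1/(2π)) ∫_{−∞}^{∞} Γ(u+ν_1+j) ∏_{l=2}^{s} Γ(u+ν_l) · y^{−u} dτ = [(−1)^p Γ(1+ν_1) / Γ(1+ν_1+p)] · (1/(2π)) ∫_{−∞}^{∞} [Γ(u) Γ(u+ν_1) ∏_{l=2}^{s} Γ(u+ν_l) / Γ(u−p)] · y^{−u} dτ, where u = c + iτ and all integrals converge absolutely. -/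

import Mathlib

open MeasureTheory Real Set Finset Complex

/-- The Pochhammer symbol `(a)_k = a(a+1)⋯(a+k−1)`, with `(a)_0 = 1`. -/
noncomputable def poch (a : ℝ) (k : ℕ) : ℝ := ∏ i ∈ Finset.range k, (a + i)

noncomputable def dfc (x : ℂ) (k : ℕ) : ℂ := ∏ i ∈ Finset.range k, (x - i)
noncomputable def pc (x : ℂ) (k : ℕ) : ℂ := ∏ i ∈ Finset.range k, (x + i)

lemma dfc_zero (x : ℂ) : dfc x 0 = 1 := by simp [dfc]
lemma dfc_succ (x : ℂ) (k : ℕ) : dfc x (k+1) = dfc x k * (x - k) := Finset.prod_range_succ _ _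
lemma pc_succ (x : ℂ) (k : ℕ) : pc x (k+1) = pc x k * (x + k) := Finset.prod_range_succ _ _

lemma vandermonde_dfc (p : ℕ) (x y : ℂ) :
    dfc (x+y) p = ∑ j ∈ range (p+1), (p.choose j : ℂ) * dfc x j * dfc y (p-j) := by
  induction p with
  | zero => simp [dfc]
  | succ p ih =>
    have key : ∀ j ∈ range (p+1),
        (p.choose j : ℂ) * dfc x j * dfc y (p-j) * (x + y - p)
        = (p.choose j : ℂ) * (dfc x j * (x - j)) * dfc y (p-j)
          + (p.choose j : ℂ) * dfc x j * (dfc y (p-j) * (y - (p-j : ℕ))) := by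
      intro j hj
      rw [Finset.mem_range] at hj
      have hjp : j ≤ p := Nat.lt_succ_iff.mp hj
      have : ((p - j : ℕ) : ℂ) = (p : ℂ) - j := by
        push_cast [Nat.cast_sub hjp]; ring
      rw [this]; ring
    calc dfc (x+y) (p+1) = dfc (x+y) p * (x + y - p) := dfc_succ _ _
      _ = (∑ j ∈ range (p+1), (p.choose j : ℂ) * dfc x j * dfc y (p-j)) * (x+y-(p:ℂ)) := by rw [ih]
      _ = ∑ j ∈ range (p+1), ((p.choose j : ℂ) * (dfc x j * (x - j)) * dfc y (p-j)
          + (p.choose j : ℂ) * dfc x j * (dfc y (p-j) * (y - (p-j : ℕ)))) := by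
        rw [Finset.sum_mul]; exact Finset.sum_congr rfl key
      _ = (∑ j ∈ range (p+1), (p.choose j : ℂ) * dfc x (j+1) * dfc y (p-j))
          + ∑ j ∈ range (p+1), (p.choose j : ℂ) * dfc x j * dfc y ((p-j)+1) := by
        rw [Finset.sum_add_distrib]
        congr 1 <;> exact Finset.sum_congr rfl (fun j _ => by rw [dfc_succ]; try ring
          ) 
      _ = ∑ j ∈ range (p+2), ((p+1).choose j : ℂ) * dfc x j * dfc y (p+1-j) := by
        rw [Finset.sum_range_succ' (fun j => ((p+1).choose j : ℂ) * dfc x j * dfc y (p+1-j)) (p+1)]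
        have e1 : ∀ j ∈ range (p+1),
            (((p+1).choose (j+1) : ℕ) : ℂ) * dfc x (j+1) * dfc y (p+1-(j+1))
            = (p.choose j : ℂ) * dfc x (j+1) * dfc y (p-j)
              + (p.choose (j+1) : ℂ) * dfc x (j+1) * dfc y (p-j) := by
          intro j hj
          rw [Nat.choose_succ_succ, Nat.succ_sub_succ]
          push_cast
          ring
        rw [Finset.sum_congr rfl e1, Finset.sum_add_distrib]
        have e2 : (∑ j ∈ range (p+1), (p.choose (j+1) : ℂ) * dfc x (j+1) * dfc y (p-j))
              + (((p+1).choose 0 : ℕ) : ℂ) * dfc x 0 * dfc y (p+1-0)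
            = ∑ j ∈ range (p+2), (p.choose j : ℂ) * dfc x j * dfc y (p+1-j) := by
          rw [Finset.sum_range_succ' (fun j => (p.choose j : ℂ) * dfc x j * dfc y (p+1-j)) (p+1)]
          simp [Nat.succ_sub_succ]
        have e3 : ∑ j ∈ range (p+2), (p.choose j : ℂ) * dfc x j * dfc y (p+1-j)
            = ∑ j ∈ range (p+1), (p.choose j : ℂ) * dfc x j * dfc y ((p-j)+1) := by
          rw [Finset.sum_range_succ]
          simp only [Nat.choose_succ_self, Nat.cast_zero, zero_mul, add_zero]
          refine Finset.sum_congr rfl (fun j hj => ?_)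
          rw [Finset.mem_range] at hj
          rw [Nat.succ_sub (Nat.lt_succ_iff.mp hj)]
        rw [add_assoc, e2, e3]
  


lemma neg_dfc (z : ℂ) (k : ℕ) : dfc (-z) k = (-1)^k * pc z k := by
  induction k with
  | zero => simp [dfc, pc]
  | succ k ih => rw [dfc_succ, pc_succ, ih]; ring

lemma fact_mul_dfc (m k : ℕ) (hk : k ≤ m) :
    ((Nat.factorial (m-k) : ℕ) : ℂ) * dfc (m : ℂ) k = ((Nat.factorial m : ℕ) : ℂ) := by
  induction k with
  | zero => simp [dfc]
  | succ k ih =>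
    have hk' : k ≤ m := Nat.le_of_succ_le hk
    have h1 : m - k = (m - (k+1)) + 1 := by omega
    rw [dfc_succ, ← mul_assoc, ← ih hk']
    rw [h1, Nat.factorial_succ]
    have h2 : ((m : ℂ) - k) = ((m - (k+1) : ℕ) : ℂ) + 1 := by
      have : m - k = (m - (k+1)) + 1 := h1
      rw [show ((m:ℂ) - k) = ((m - k : ℕ) : ℂ) by push_cast [Nat.cast_sub hk']; ring, this]
      push_cast
      ring
    rw [h2]
    push_cast
    ring

lemma poch_neg_nat (p j : ℕ) (hj : j ≤ p) :
    poch (-(p:ℝ)) j = (-1)^j * (p.choose j : ℝ) * (Nat.factorial j : ℝ) := by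
  induction j with
  | zero => simp [poch]
  | succ j ih =>
    have hj' : j ≤ p := Nat.le_of_succ_le hj
    rw [poch, Finset.prod_range_succ, ← poch, ih hj']
    have hstep : (-(p:ℝ) + j) = -((p:ℝ) - j) := by ring
    rw [hstep, Nat.factorial_succ]
    have hcast : (p.choose (j+1) : ℝ) * (j+1) = (p.choose j : ℝ) * ((p:ℝ) - j) := by
      have h2 : ((p.choose (j+1) * (j+1) : ℕ) : ℝ) = ((p.choose j * (p-j) : ℕ) : ℝ) := by
        exact_mod_cast congrArg (Nat.cast : ℕ → ℝ) (Nat.choose_succ_right_eq p j)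
      push_cast [Nat.cast_sub hj'] at h2
      linarith [h2]
    push_cast
    linear_combination (-1:ℝ)^j * (Nat.factorial j : ℝ) * hcast

lemma poch_nat_fact (ν j : ℕ) :
    ((Nat.factorial ν : ℕ) : ℝ) * poch ((ν:ℝ)+1) j = ((Nat.factorial (ν+j) : ℕ) : ℝ) := by
  induction j with
  | zero => simp [poch]
  | succ j ih =>
    rw [poch, Finset.prod_range_succ, ← poch, ← mul_assoc, ih]
    have : ((ν:ℝ)+1+j) = ((ν+j+1 : ℕ) : ℝ) := by push_cast; ring
    rw [this, ← Nat.cast_mul]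
    norm_cast
    rw [mul_comm, ← Nat.factorial_succ, show ν + j + 1 = ν + (j+1) from rfl]

lemma poch_pos (ν j : ℕ) : 0 < poch ((ν:ℝ)+1) j := by
  unfold poch
  exact Finset.prod_pos (fun i _ => by positivity)

lemma core_identity (p ν : ℕ) (b : ℂ) :
    ∑ j ∈ range (p+1),
      ((poch (-(p:ℝ)) j / (poch ((ν:ℝ) + 1) j * (Nat.factorial j : ℝ))) : ℂ) * pc b j
    = (((-1:ℝ)^p * Real.Gamma (1+(ν:ℝ)) / Real.Gamma (1+(ν:ℝ)+p)) : ℂ) * pc (b - ν - p) p := by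
  have hfν : ((Nat.factorial ν : ℕ) : ℂ) ≠ 0 := by exact_mod_cast Nat.factorial_ne_zero ν
  have hfνp : ((Nat.factorial (ν+p) : ℕ) : ℂ) ≠ 0 := by exact_mod_cast Nat.factorial_ne_zero _
  have hterm : ∀ j ∈ range (p+1),
      ((poch (-(p:ℝ)) j / (poch ((ν:ℝ) + 1) j * (Nat.factorial j : ℝ))) : ℂ) * pc b j
      = (((Nat.factorial ν : ℝ) / (Nat.factorial (ν+p) : ℝ) : ℝ) : ℂ) *
        ((p.choose j : ℂ) * dfc (-b) j * dfc ((ν:ℂ)+(p:ℂ)) (p-j)) := by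
    intro j hj
    rw [Finset.mem_range, Nat.lt_succ_iff] at hj
    have hfjR : (Nat.factorial j : ℝ) ≠ 0 := by exact_mod_cast Nat.factorial_ne_zero j
    have hfνR : (Nat.factorial ν : ℝ) ≠ 0 := by exact_mod_cast Nat.factorial_ne_zero ν
    have hfνjR : (Nat.factorial (ν+j) : ℝ) ≠ 0 := by exact_mod_cast Nat.factorial_ne_zero _
    have hfj2 : ((Nat.factorial (ν+j) : ℕ) : ℂ) ≠ 0 := by exact_mod_cast Nat.factorial_ne_zero _
    have hpochpos := poch_pos ν j
    have hpoch : poch ((ν:ℝ)+1) j = (Nat.factorial (ν+j) : ℝ) / (Nat.factorial ν : ℝ) := by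
      rw [eq_div_iff hfνR]
      linear_combination poch_nat_fact ν j
    have hcoeff : (poch (-(p:ℝ)) j / (poch ((ν:ℝ)+1) j * (Nat.factorial j : ℝ)))
        = (-1)^j * (p.choose j : ℝ) * ((Nat.factorial ν : ℝ) / (Nat.factorial (ν+j) : ℝ)) := by
      rw [poch_neg_nat p j hj, hpoch]
      field_simp
    have hdf : ((Nat.factorial (ν+j) : ℕ) : ℂ) * dfc ((ν:ℂ)+(p:ℂ)) (p-j)
        = ((Nat.factorial (ν+p) : ℕ) : ℂ) := by
      have h := fact_mul_dfc (ν+p) (p-j) (by omega)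
      rw [show ν+p-(p-j) = ν+j by omega] at h
      rw [show ((ν:ℂ)+(p:ℂ)) = (((ν+p : ℕ)) : ℂ) by push_cast; ring]
      exact h
    have hdf' : dfc ((ν:ℂ)+(p:ℂ)) (p-j)
        = ((Nat.factorial (ν+p) : ℕ) : ℂ) / ((Nat.factorial (ν+j) : ℕ) : ℂ) := by
      rw [eq_div_iff hfj2]
      linear_combination hdf
    have hC := congrArg (fun t : ℝ => (t : ℂ)) hcoeff
    push_cast at hC ⊢
    rw [hC, hdf', neg_dfc]
    field_simp
  rw [Finset.sum_congr rfl hterm, ← Finset.mul_sum,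
    ← vandermonde_dfc p (-b) ((ν:ℂ)+(p:ℂ)),
    show (-b) + ((ν:ℂ)+(p:ℂ)) = -(b - ν - p) by ring, neg_dfc]
  have hG1 : Real.Gamma (1+(ν:ℝ)) = (Nat.factorial ν : ℝ) := by
    rw [add_comm]; exact_mod_cast Real.Gamma_nat_eq_factorial ν
  have hG2 : Real.Gamma (1+(ν:ℝ)+(p:ℝ)) = (Nat.factorial (ν+p) : ℝ) := by
    rw [show (1+(ν:ℝ)+(p:ℝ)) = ((ν+p : ℕ):ℝ)+1 by push_cast; ring]
    exact_mod_cast Real.Gamma_nat_eq_factorial (ν+p)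
  rw [hG1, hG2]
  push_cast
  ring


lemma abs_Gamma_le {z : ℂ} (hz : 0 < z.re) :
    ‖Complex.Gamma z‖ ≤ Real.Gamma z.re := by
  rw [Complex.Gamma_eq_integral hz, Real.Gamma_eq_integral hz, Complex.GammaIntegral]
  refine le_trans (MeasureTheory.norm_integral_le_integral_norm _) (le_of_eq ?_)
  refine MeasureTheory.setIntegral_congr_fun measurableSet_Ioi (fun x hx => ?_)
  simp only [norm_mul, Complex.norm_real, Real.norm_eq_abs]
  rw [Complex.norm_cpow_eq_rpow_re_of_pos hx]
  simp [abs_of_pos (Real.exp_pos _), Complex.sub_re]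

lemma Gamma_add_nat (z : ℂ) (hz : 0 < z.re) (n : ℕ) :
    Complex.Gamma (z + n) = Complex.Gamma z * pc z n := by
  induction n with
  | zero => simp [pc]
  | succ n ih =>
    have hne : z + n ≠ 0 := by
      intro h
      have : (z + n).re = 0 := by rw [h]; simp
      simp only [Complex.add_re, Complex.natCast_re] at this
      have : (0:ℝ) < z.re + n := by positivity
      linarith
    rw [show z + (n+1 : ℕ) = (z + n) + 1 by push_cast; ring, Complex.Gamma_add_one _ hne,
      ih, pc_succ]
    ring



lemma Gamma_add_nat' (z : ℂ) (hz : ∀ k : ℕ, z + (k:ℂ) ≠ 0) (n : ℕ) :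
    Complex.Gamma (z + n) = Complex.Gamma z * pc z n := by
  induction n with
  | zero => simp [pc]
  | succ n ih =>
    have hne : z + (n:ℂ) ≠ 0 := hz n
    rw [show z + ((n+1 : ℕ):ℂ) = (z + (n:ℕ)) + 1 by push_cast; ring,
      Complex.Gamma_add_one _ hne, ih, pc_succ]
    ring

lemma sqrt_le_abs {w : ℂ} {c τ : ℝ} (hc : 0 ≤ c) (h1 : c ≤ w.re) (h2 : w.im = τ) :
    Real.sqrt (c^2 + τ^2) ≤ ‖w‖ := by
  rw [Complex.norm_def, Complex.normSq_apply]
  apply Real.sqrt_le_sqrt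
  have h3 : c*c ≤ w.re*w.re := mul_le_mul h1 h1 hc (hc.trans h1)
  subst h2
  nlinarith [h3]

lemma Gamma_decay (c a : ℝ) (hc : 0 < c) (ha : 0 ≤ a) (m : ℕ) (τ : ℝ) :
    ‖Complex.Gamma ((c:ℂ) + τ*Complex.I + a)‖ * (Real.sqrt (c^2+τ^2))^m
      ≤ Real.Gamma (c + a + m) := by
  set z : ℂ := (c:ℂ) + τ*Complex.I + a with hzdef
  have hzre : z.re = c + a := by simp [hzdef]
  have hzim : z.im = τ := by simp [hzdef]
  have hz : 0 < z.re := by rw [hzre]; linarith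
  have h2 : ‖Complex.Gamma (z + m)‖ ≤ Real.Gamma (c+a+m) := by
    have hre : (z + (m:ℂ)).re = c + a + m := by simp [hzre]
    have := abs_Gamma_le (z := z + m) (by rw [hre]; positivity)
    rwa [hre] at this
  have h3 : (Real.sqrt (c^2+τ^2))^m ≤ ‖pc z m‖ := by
    rw [pc, Complex.norm_prod]
    have : Real.sqrt (c^2+τ^2) ^ m = ∏ _i ∈ Finset.range m, Real.sqrt (c^2+τ^2) := by
      rw [Finset.prod_const, Finset.card_range]
    rw [this]
    refine Finset.prod_le_prod (fun i _ => Real.sqrt_nonneg _) (fun i _ => ?_)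
    refine sqrt_le_abs (le_of_lt hc) ?_ ?_
    · have : (z + (i:ℂ)).re = c + a + i := by simp [hzre]
      rw [this]
      have : (0:ℝ) ≤ i := Nat.cast_nonneg i
      linarith
    · simp [hzim]
  calc ‖Complex.Gamma z‖ * (Real.sqrt (c^2+τ^2))^m
      ≤ ‖Complex.Gamma z‖ * ‖pc z m‖ :=
        mul_le_mul_of_nonneg_left h3 (norm_nonneg _)
    _ = ‖Complex.Gamma z * pc z m‖ := (norm_mul _ _).symm
    _ = ‖Complex.Gamma (z + m)‖ := by rw [Gamma_add_nat z hz m]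
    _ ≤ Real.Gamma (c+a+m) := h2

lemma integrable_bound (c B : ℝ) (hc : 0 < c) :
    Integrable (fun τ : ℝ => B / (c^2 + τ^2)) := by
  have h : (fun τ : ℝ => B / (c^2+τ^2)) = fun τ => (B/c^2) * (1 + (τ/c)^2)⁻¹ := by
    funext τ
    have : c^2 + τ^2 ≠ 0 := by positivity
    field_simp
    try ring
  rw [h]
  exact ((integrable_inv_one_add_sq).comp_div (ne_of_gt hc)).const_mul _

lemma integrable_of_bound (f : ℝ → ℂ) (hf : AEStronglyMeasurable f volume) (c B : ℝ)
    (hc : 0 < c) (hb : ∀ τ, ‖f τ‖ ≤ B / (c^2 + τ^2)) : Integrable f :=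
  Integrable.mono' (integrable_bound c B hc) hf
    (Filter.Eventually.of_forall (fun τ => by simpa using hb τ))

section MainAux

variable {c y : ℝ}

lemma abs_mul3_le {A B C : ℂ} {a b d : ℝ} (hA : ‖A‖ ≤ a) (hB : ‖B‖ ≤ b)
    (hC : ‖C‖ ≤ d) : ‖A*B*C‖ ≤ a*b*d := by
  have h0 : ∀ z : ℂ, 0 ≤ ‖z‖ := fun z => norm_nonneg z
  rw [norm_mul, norm_mul]
  exact mul_le_mul (mul_le_mul hA hB (h0 B) ((h0 A).trans hA)) hC (h0 C)
    (mul_nonneg ((h0 A).trans hA) ((h0 B).trans hB))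

lemma abs_u_eq (c τ : ℝ) :
    ‖(c:ℂ) + τ*Complex.I‖ = Real.sqrt (c^2 + τ^2) := by
  rw [Complex.norm_def, Complex.normSq_apply]
  have h1 : ((c:ℂ) + τ*Complex.I).re = c := by simp
  have h2 : ((c:ℂ) + τ*Complex.I).im = τ := by simp
  rw [h1, h2]
  congr 1
  ring

lemma pcΓ_decay (hc : 0 < c) (a : ℝ) (ha : 0 ≤ a) (p : ℕ) (τ : ℝ) :
    ‖pc ((c:ℂ) + τ*Complex.I - p) p‖ *
      ‖Complex.Gamma ((c:ℂ) + τ*Complex.I + a)‖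
      ≤ ((1+p/c)^p * Real.Gamma (c + a + (p+2))) / (c^2+τ^2) := by
  set q := Real.sqrt (c^2 + τ^2) with hqdef
  have hq2 : q^2 = c^2 + τ^2 := Real.sq_sqrt (by positivity)
  have hcq : c ≤ q := by
    nlinarith [hq2, Real.sqrt_nonneg (c^2+τ^2), sq_nonneg τ, sq_nonneg (q - c)]
  have hq0 : 0 < q := lt_of_lt_of_le hc hcq
  have h1 : ‖pc ((c:ℂ) + τ*Complex.I - p) p‖ ≤ (q + p)^p := by
    rw [pc, Complex.norm_prod]
    have he : (q + (p:ℝ))^p = ∏ _i ∈ Finset.range p, (q + p) := by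
      rw [Finset.prod_const, Finset.card_range]
    rw [he]
    refine Finset.prod_le_prod (fun i _ => norm_nonneg _) (fun i hi => ?_)
    rw [Finset.mem_range] at hi
    have harg : (c:ℂ) + τ*Complex.I - p + i = ((c:ℂ) + τ*Complex.I) + (((i:ℝ) - p : ℝ):ℂ) := by
      push_cast; ring
    rw [harg]
    refine le_trans (norm_add_le _ _) ?_
    rw [abs_u_eq, Complex.norm_real, Real.norm_eq_abs, abs_of_nonpos (by
      have : (i:ℝ) ≤ p := by exact_mod_cast hi.le
      linarith)]
    have : (0:ℝ) ≤ i := Nat.cast_nonneg i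
    linarith
  have h1' : (q + p)^p ≤ (1+p/c)^p * q^p := by
    rw [← mul_pow]
    refine pow_le_pow_left₀ (by positivity) ?_ p
    have hpc : (p:ℝ)/c * c = p := div_mul_cancel₀ _ (ne_of_gt hc)
    have h2 : (p:ℝ)/c * c ≤ (p:ℝ)/c * q :=
      mul_le_mul_of_nonneg_left hcq (by positivity)
    nlinarith [h2, hpc]
  have h2 : ‖Complex.Gamma ((c:ℂ) + τ*Complex.I + a)‖ * q^(p+2)
      ≤ Real.Gamma (c + a + (p+2)) := by
    have := Gamma_decay c a hc ha (p+2) τ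
    rw [← hqdef] at this
    convert this using 3
    push_cast; ring
  have hΓ0 : 0 ≤ ‖Complex.Gamma ((c:ℂ) + τ*Complex.I + a)‖ := norm_nonneg _
  have h3 : ‖Complex.Gamma ((c:ℂ) + τ*Complex.I + a)‖ * q^p
      ≤ Real.Gamma (c + a + (p+2)) / q^2 := by
    rw [le_div_iff₀ (by positivity)]
    calc ‖Complex.Gamma ((c:ℂ) + τ*Complex.I + a)‖ * q^p * q^2
        = ‖Complex.Gamma ((c:ℂ) + τ*Complex.I + a)‖ * q^(p+2) := by
          rw [pow_add]; ring
      _ ≤ Real.Gamma (c + a + (p+2)) := h2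
  calc ‖pc ((c:ℂ) + τ*Complex.I - p) p‖ *
        ‖Complex.Gamma ((c:ℂ) + τ*Complex.I + a)‖
      ≤ ((1+p/c)^p * q^p) * ‖Complex.Gamma ((c:ℂ) + τ*Complex.I + a)‖ :=
        mul_le_mul_of_nonneg_right (h1.trans h1') hΓ0
    _ = (1+p/c)^p * (‖Complex.Gamma ((c:ℂ) + τ*Complex.I + a)‖ * q^p) := by ring
    _ ≤ (1+p/c)^p * (Real.Gamma (c + a + (p+2)) / q^2) :=
        mul_le_mul_of_nonneg_left h3 (by positivity)
    _ = ((1+p/c)^p * Real.Gamma (c + a + (p+2))) / (c^2+τ^2) := by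
        rw [hq2]; ring

end MainAux


/-- Fix `s ≥ 1`, nonnegative integers `ν_1,…,ν_s`, an integer `p ≥ 0` and reals
`y, c > 0`.  Then, with `u = c+iτ`,
`∑_{j=0}^p [(−p)_j/((ν_1+1)_j j!)] (1/2π)∫ Γ(u+ν_1+j) ∏_{l=2}^s Γ(u+ν_l) y^{−u} dτ
 = [(−1)^p Γ(1+ν_1)/Γ(1+ν_1+p)] (1/2π)∫ [Γ(u)Γ(u+ν_1)∏_{l=2}^s Γ(u+ν_l)/Γ(u−p)] y^{−u} dτ`,
and all the contour integrals converge absolutely. -/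
theorem chu_vandermonde_contour (s : ℕ) (hs : 1 ≤ s) (ν : ℕ → ℕ) (p : ℕ) (y c : ℝ)
    (hy : 0 < y) (hc : 0 < c) :
    (∀ j : ℕ, j ≤ p → Integrable
      (fun τ : ℝ =>
        Complex.Gamma (((c : ℂ) + τ * Complex.I) + (ν 1 : ℂ) + (j : ℂ)) *
          (∏ l : Fin (s - 1),
            Complex.Gamma (((c : ℂ) + τ * Complex.I) + (ν ((l : ℕ) + 2) : ℂ))) *
          (y : ℂ) ^ (-((c : ℂ) + τ * Complex.I)))) ∧
    Integrable
      (fun τ : ℝ =>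
        Complex.Gamma ((c : ℂ) + τ * Complex.I) *
            Complex.Gamma (((c : ℂ) + τ * Complex.I) + (ν 1 : ℂ)) *
            (∏ l : Fin (s - 1),
              Complex.Gamma (((c : ℂ) + τ * Complex.I) + (ν ((l : ℕ) + 2) : ℂ))) /
            Complex.Gamma (((c : ℂ) + τ * Complex.I) - (p : ℂ)) *
          (y : ℂ) ^ (-((c : ℂ) + τ * Complex.I))) ∧
    (∑ j ∈ Finset.range (p + 1),
        ((poch (-(p : ℝ)) j / (poch ((ν 1 : ℝ) + 1) j * (Nat.factorial j : ℝ))) : ℂ) *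
          ((1 / (2 * (Real.pi : ℂ))) *
            ∫ τ : ℝ,
              Complex.Gamma (((c : ℂ) + τ * Complex.I) + (ν 1 : ℂ) + (j : ℂ)) *
                (∏ l : Fin (s - 1),
                  Complex.Gamma (((c : ℂ) + τ * Complex.I) + (ν ((l : ℕ) + 2) : ℂ))) *
                (y : ℂ) ^ (-((c : ℂ) + τ * Complex.I)))
      = (((-1 : ℝ) ^ p * Real.Gamma (1 + (ν 1 : ℝ)) / Real.Gamma (1 + (ν 1 : ℝ) + p)) : ℂ) *
          ((1 / (2 * (Real.pi : ℂ))) *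
            ∫ τ : ℝ,
              Complex.Gamma ((c : ℂ) + τ * Complex.I) *
                  Complex.Gamma (((c : ℂ) + τ * Complex.I) + (ν 1 : ℂ)) *
                  (∏ l : Fin (s - 1),
                    Complex.Gamma (((c : ℂ) + τ * Complex.I) + (ν ((l : ℕ) + 2) : ℂ))) /
                  Complex.Gamma (((c : ℂ) + τ * Complex.I) - (p : ℂ)) *
                (y : ℂ) ^ (-((c : ℂ) + τ * Complex.I)))) := by
  have hy' : (y:ℂ) ≠ 0 := by exact_mod_cast ne_of_gt hy
  -- continuity building blocks
  have hucont : Continuous (fun τ : ℝ => (c:ℂ) + (τ:ℂ) * Complex.I) :=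
    continuous_const.add (Complex.continuous_ofReal.mul continuous_const)
  have hGcont : ∀ a : ℝ, 0 ≤ a →
      Continuous (fun τ : ℝ => Complex.Gamma ((c:ℂ) + τ*Complex.I + (a:ℂ))) := by
    intro a ha
    rw [continuous_iff_continuousAt]
    intro τ
    have hne : ∀ m : ℕ, (c:ℂ) + τ*Complex.I + (a:ℂ) ≠ -(m:ℂ) := by
      intro m heq
      have h1 := congrArg Complex.re heq
      simp only [Complex.add_re, Complex.ofReal_re, Complex.mul_re, Complex.I_re,
        Complex.I_im, Complex.ofReal_im, Complex.neg_re, Complex.natCast_re] at h1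
      have : (0:ℝ) ≤ m := Nat.cast_nonneg m
      linarith [h1]
    have hf : ContinuousAt (fun τ' : ℝ => (c:ℂ) + τ'*Complex.I + (a:ℂ)) τ :=
      (hucont.add continuous_const).continuousAt
    exact ContinuousAt.comp (f := fun τ' : ℝ => (c:ℂ) + τ'*Complex.I + (a:ℂ)) (x := τ)
      ((Complex.differentiableAt_Gamma _ hne).continuousAt) hf
  have hycont : Continuous (fun τ : ℝ => (y : ℂ) ^ (-((c : ℂ) + τ * Complex.I))) :=
    hucont.neg.const_cpow (Or.inl hy')
  have hPrcont : Continuous (fun τ : ℝ => ∏ l : Fin (s - 1),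
      Complex.Gamma (((c : ℂ) + τ * Complex.I) + (ν ((l : ℕ) + 2) : ℂ))) := by
    apply continuous_finset_prod
    intro l _
    have := hGcont ((ν ((l:ℕ)+2) : ℕ) : ℝ) (Nat.cast_nonneg _)
    simpa using this
  -- bound for the product
  set D : ℝ := ∏ l : Fin (s - 1), Real.Gamma (c + (ν ((l:ℕ)+2) : ℕ)) with hD
  have hD0 : 0 ≤ D := Finset.prod_nonneg (fun l _ =>
    (Real.Gamma_pos_of_pos (by positivity)).le)
  have hPrbound : ∀ τ : ℝ, ‖∏ l : Fin (s - 1),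
      Complex.Gamma (((c : ℂ) + τ * Complex.I) + (ν ((l : ℕ) + 2) : ℂ))‖ ≤ D := by
    intro τ
    rw [Complex.norm_prod, hD]
    refine Finset.prod_le_prod (fun l _ => norm_nonneg _) (fun l _ => ?_)
    have hre : (((c : ℂ) + τ * Complex.I) + (ν ((l:ℕ)+2) : ℂ)).re = c + (ν ((l:ℕ)+2) : ℕ) := by
      simp
    have := abs_Gamma_le (z := ((c : ℂ) + τ * Complex.I) + (ν ((l:ℕ)+2) : ℂ))
      (by rw [hre]; positivity)
    rwa [hre] at this
  have hyabs : ∀ τ : ℝ, ‖(y : ℂ) ^ (-((c : ℂ) + τ * Complex.I))‖ = y ^ (-c) := by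
    intro τ
    rw [Complex.norm_cpow_eq_rpow_re_of_pos hy]
    congr 1
    simp
  have hyc0 : (0:ℝ) ≤ y ^ (-c) := (Real.rpow_pos_of_pos hy _).le
  -- Part 1 : integrability of the F_j
  have hInt : ∀ j : ℕ, j ≤ p → Integrable
      (fun τ : ℝ =>
        Complex.Gamma (((c : ℂ) + τ * Complex.I) + (ν 1 : ℂ) + (j : ℂ)) *
          (∏ l : Fin (s - 1),
            Complex.Gamma (((c : ℂ) + τ * Complex.I) + (ν ((l : ℕ) + 2) : ℂ))) *
          (y : ℂ) ^ (-((c : ℂ) + τ * Complex.I))) := by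
    intro j _
    have harg : ∀ τ : ℝ, ((c : ℂ) + τ * Complex.I) + (ν 1 : ℂ) + (j : ℂ)
        = (c : ℂ) + τ * Complex.I + ((((ν 1 : ℕ) + j : ℝ)) : ℂ) := by
      intro τ; push_cast; ring
    refine integrable_of_bound _ ?_ c
      (Real.Gamma (c + ((ν 1 : ℕ) + j : ℝ) + 2) * D * y ^ (-c)) hc ?_
    · refine Continuous.aestronglyMeasurable ?_
      refine Continuous.mul (Continuous.mul ?_ hPrcont) hycont
      have := hGcont (((ν 1 : ℕ) + j : ℝ)) (by positivity)
      refine this.congr (fun τ => ?_)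
      rw [harg]
    · intro τ
      have hq2 : (Real.sqrt (c^2+τ^2))^2 = c^2+τ^2 := Real.sq_sqrt (by positivity)
      have hΓ : ‖Complex.Gamma (((c : ℂ) + τ * Complex.I) + (ν 1 : ℂ) + (j : ℂ))‖
          ≤ Real.Gamma (c + ((ν 1 : ℕ) + j : ℝ) + 2) / (c^2+τ^2) := by
        rw [le_div_iff₀ (by positivity), harg τ]
        have := Gamma_decay c (((ν 1 : ℕ) + j : ℝ)) hc (by positivity) 2 τ
        rw [hq2] at this
        exact this.trans (le_of_eq (by norm_num))
      refine le_trans (abs_mul3_le hΓ (hPrbound τ) (le_of_eq (hyabs τ))) (le_of_eq ?_)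
      field_simp
  -- the regularized RHS integrand
  set G' : ℝ → ℂ := fun τ =>
    pc ((c:ℂ) + τ*Complex.I - p) p *
      (Complex.Gamma (((c : ℂ) + τ * Complex.I) + (ν 1 : ℂ)) *
        (∏ l : Fin (s - 1),
          Complex.Gamma (((c : ℂ) + τ * Complex.I) + (ν ((l : ℕ) + 2) : ℂ))) *
        (y : ℂ) ^ (-((c : ℂ) + τ * Complex.I))) with hG'
  have hargν : ∀ τ : ℝ, ((c : ℂ) + τ * Complex.I) + (ν 1 : ℂ)
      = (c : ℂ) + τ * Complex.I + (((ν 1 : ℕ) : ℝ) : ℂ) := by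
    intro τ; push_cast; ring
  have hG'cont : Continuous G' := by
    rw [hG']
    refine Continuous.mul ?_ (Continuous.mul (Continuous.mul ?_ hPrcont) hycont)
    · unfold pc
      refine continuous_finset_prod _ (fun i _ => ?_)
      exact (hucont.sub continuous_const).add continuous_const
    · have := hGcont (((ν 1 : ℕ) : ℝ)) (Nat.cast_nonneg _)
      refine this.congr (fun τ => ?_)
      rw [hargν]
  have hG'int : Integrable G' := by
    refine integrable_of_bound _ hG'cont.aestronglyMeasurable c
      ((1+p/c)^p * Real.Gamma (c + ((ν 1 : ℕ) : ℝ) + (p+2)) * D * y ^ (-c)) hc ?_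
    intro τ
    rw [hG']
    simp only []
    rw [norm_mul]
    have h1 : ‖pc ((c:ℂ) + τ*Complex.I - p) p‖ *
        ‖Complex.Gamma (((c : ℂ) + τ * Complex.I) + (ν 1 : ℂ))‖
        ≤ ((1+p/c)^p * Real.Gamma (c + ((ν 1 : ℕ) : ℝ) + (p+2))) / (c^2+τ^2) := by
      rw [hargν τ]
      exact pcΓ_decay hc _ (Nat.cast_nonneg _) p τ
    have h2 : ‖
        (Complex.Gamma (((c : ℂ) + τ * Complex.I) + (ν 1 : ℂ)) *
          (∏ l : Fin (s - 1),
            Complex.Gamma (((c : ℂ) + τ * Complex.I) + (ν ((l : ℕ) + 2) : ℂ))) *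
          (y : ℂ) ^ (-((c : ℂ) + τ * Complex.I)))‖
        ≤ ‖Complex.Gamma (((c : ℂ) + τ * Complex.I) + (ν 1 : ℂ))‖ * D * y^(-c) :=
      abs_mul3_le (le_refl _) (hPrbound τ) (le_of_eq (hyabs τ))
    calc ‖pc ((c:ℂ) + τ*Complex.I - p) p‖ * ‖
          (Complex.Gamma (((c : ℂ) + τ * Complex.I) + (ν 1 : ℂ)) *
            (∏ l : Fin (s - 1),
              Complex.Gamma (((c : ℂ) + τ * Complex.I) + (ν ((l : ℕ) + 2) : ℂ))) *
            (y : ℂ) ^ (-((c : ℂ) + τ * Complex.I)))‖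
        ≤ ‖pc ((c:ℂ) + τ*Complex.I - p) p‖ *
          (‖Complex.Gamma (((c : ℂ) + τ * Complex.I) + (ν 1 : ℂ))‖ * D * y^(-c)) :=
          mul_le_mul_of_nonneg_left h2 (norm_nonneg _)
      _ = (‖pc ((c:ℂ) + τ*Complex.I - p) p‖ *
          ‖Complex.Gamma (((c : ℂ) + τ * Complex.I) + (ν 1 : ℂ))‖) * D * y^(-c) := by
          ring
      _ ≤ (((1+p/c)^p * Real.Gamma (c + ((ν 1 : ℕ) : ℝ) + (p+2))) / (c^2+τ^2)) * D * y^(-c) := by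
          refine mul_le_mul_of_nonneg_right (mul_le_mul_of_nonneg_right h1 hD0) hyc0
      _ = ((1+p/c)^p * Real.Gamma (c + ((ν 1 : ℕ) : ℝ) + (p+2)) * D * y ^ (-c)) / (c^2+τ^2) := by
          ring
  -- relation between G and G'
  have hGG' : ∀ τ : ℝ, τ ≠ 0 →
      Complex.Gamma ((c : ℂ) + τ * Complex.I) *
          Complex.Gamma (((c : ℂ) + τ * Complex.I) + (ν 1 : ℂ)) *
          (∏ l : Fin (s - 1),
            Complex.Gamma (((c : ℂ) + τ * Complex.I) + (ν ((l : ℕ) + 2) : ℂ))) /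
          Complex.Gamma (((c : ℂ) + τ * Complex.I) - (p : ℂ)) *
        (y : ℂ) ^ (-((c : ℂ) + τ * Complex.I)) = G' τ := by
    intro τ hτ
    have him : ∀ k : ℕ, ((c : ℂ) + τ * Complex.I - (p:ℂ) + (k:ℂ)).im = τ := by
      intro k; simp
    have hne : ∀ k : ℕ, (c : ℂ) + τ * Complex.I - (p:ℂ) + (k:ℂ) ≠ 0 := by
      intro k heq
      have := congrArg Complex.im heq
      rw [him k] at this
      simp at this
      exact hτ this
    have hΓne : Complex.Gamma (((c : ℂ) + τ * Complex.I) - (p : ℂ)) ≠ 0 := by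
      refine Complex.Gamma_ne_zero (fun m => ?_)
      intro heq
      have := congrArg Complex.im heq
      simp at this
      exact hτ this
    have hsplit : Complex.Gamma ((c : ℂ) + τ * Complex.I)
        = Complex.Gamma (((c : ℂ) + τ * Complex.I) - (p : ℂ)) *
          pc ((c:ℂ) + τ*Complex.I - p) p := by
      have h0 : (c : ℂ) + τ * Complex.I = ((c : ℂ) + τ * Complex.I - (p:ℂ)) + (p:ℕ) := by
        push_cast; ring
      conv_lhs => rw [h0]
      rw [Gamma_add_nat' _ hne p]
    rw [hG']
    simp only []
    conv_lhs => rw [hsplit]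
    field_simp
  have hae : (fun τ : ℝ =>
      Complex.Gamma ((c : ℂ) + τ * Complex.I) *
          Complex.Gamma (((c : ℂ) + τ * Complex.I) + (ν 1 : ℂ)) *
          (∏ l : Fin (s - 1),
            Complex.Gamma (((c : ℂ) + τ * Complex.I) + (ν ((l : ℕ) + 2) : ℂ))) /
          Complex.Gamma (((c : ℂ) + τ * Complex.I) - (p : ℂ)) *
        (y : ℂ) ^ (-((c : ℂ) + τ * Complex.I))) =ᵐ[volume] G' := by
    rw [Filter.eventuallyEq_iff_exists_mem]
    refine ⟨{τ : ℝ | τ ≠ 0}, ?_, fun τ hτ => hGG' τ hτ⟩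
    rw [mem_ae_iff]
    have : {τ : ℝ | τ ≠ 0}ᶜ = {(0:ℝ)} := by
      ext τ; simp
    rw [this]
    exact measure_singleton 0
  have hGint : Integrable
      (fun τ : ℝ =>
        Complex.Gamma ((c : ℂ) + τ * Complex.I) *
            Complex.Gamma (((c : ℂ) + τ * Complex.I) + (ν 1 : ℂ)) *
            (∏ l : Fin (s - 1),
              Complex.Gamma (((c : ℂ) + τ * Complex.I) + (ν ((l : ℕ) + 2) : ℂ))) /
            Complex.Gamma (((c : ℂ) + τ * Complex.I) - (p : ℂ)) *
          (y : ℂ) ^ (-((c : ℂ) + τ * Complex.I))) := hG'int.congr hae.symm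
  refine ⟨hInt, hGint, ?_⟩
  -- the pointwise identity
  have hpt : ∀ τ : ℝ, (∑ j ∈ Finset.range (p + 1),
      ((poch (-(p : ℝ)) j / (poch ((ν 1 : ℝ) + 1) j * (Nat.factorial j : ℝ))) : ℂ) *
        (Complex.Gamma (((c : ℂ) + τ * Complex.I) + (ν 1 : ℂ) + (j : ℂ)) *
          (∏ l : Fin (s - 1),
            Complex.Gamma (((c : ℂ) + τ * Complex.I) + (ν ((l : ℕ) + 2) : ℂ))) *
          (y : ℂ) ^ (-((c : ℂ) + τ * Complex.I))))
      = (((-1 : ℝ) ^ p * Real.Gamma (1 + (ν 1 : ℝ)) / Real.Gamma (1 + (ν 1 : ℝ) + p)) : ℂ) *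
        G' τ := by
    intro τ
    set z : ℂ := ((c : ℂ) + τ * Complex.I) + (ν 1 : ℂ) with hz
    have hzre : 0 < z.re := by
      rw [hz]
      simp only [Complex.add_re, Complex.ofReal_re, Complex.mul_re, Complex.I_re,
        Complex.I_im, Complex.ofReal_im, Complex.natCast_re]
      have : (0:ℝ) ≤ (ν 1 : ℕ) := Nat.cast_nonneg _
      nlinarith [hc]
    have hterm : ∀ j ∈ Finset.range (p+1),
        ((poch (-(p : ℝ)) j / (poch ((ν 1 : ℝ) + 1) j * (Nat.factorial j : ℝ))) : ℂ) *
        (Complex.Gamma (z + (j : ℂ)) *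
          (∏ l : Fin (s - 1),
            Complex.Gamma (((c : ℂ) + τ * Complex.I) + (ν ((l : ℕ) + 2) : ℂ))) *
          (y : ℂ) ^ (-((c : ℂ) + τ * Complex.I)))
        = (((poch (-(p : ℝ)) j / (poch ((ν 1 : ℝ) + 1) j * (Nat.factorial j : ℝ))) : ℂ) *
            pc z j) *
          (Complex.Gamma z *
            ((∏ l : Fin (s - 1),
              Complex.Gamma (((c : ℂ) + τ * Complex.I) + (ν ((l : ℕ) + 2) : ℂ))) *
            (y : ℂ) ^ (-((c : ℂ) + τ * Complex.I)))) := by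
      intro j _
      rw [show z + (j:ℂ) = z + (j:ℕ) by push_cast; ring, Gamma_add_nat z hzre j]
      ring
    rw [Finset.sum_congr rfl hterm, ← Finset.sum_mul, core_identity p (ν 1) z]
    rw [hG']
    simp only []
    rw [show z - ((ν 1 : ℕ):ℂ) - (p:ℂ) = (c:ℂ) + τ*Complex.I - (p:ℂ) by rw [hz]; ring]
    ring
  -- put everything together
  calc (∑ j ∈ Finset.range (p + 1),
        ((poch (-(p : ℝ)) j / (poch ((ν 1 : ℝ) + 1) j * (Nat.factorial j : ℝ))) : ℂ) *
          ((1 / (2 * (Real.pi : ℂ))) *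
            ∫ τ : ℝ,
              Complex.Gamma (((c : ℂ) + τ * Complex.I) + (ν 1 : ℂ) + (j : ℂ)) *
                (∏ l : Fin (s - 1),
                  Complex.Gamma (((c : ℂ) + τ * Complex.I) + (ν ((l : ℕ) + 2) : ℂ))) *
                (y : ℂ) ^ (-((c : ℂ) + τ * Complex.I))))
      = (1 / (2 * (Real.pi : ℂ))) * ∑ j ∈ Finset.range (p + 1),
          ∫ τ : ℝ, ((poch (-(p : ℝ)) j / (poch ((ν 1 : ℝ) + 1) j * (Nat.factorial j : ℝ))) : ℂ) *
            (Complex.Gamma (((c : ℂ) + τ * Complex.I) + (ν 1 : ℂ) + (j : ℂ)) *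
              (∏ l : Fin (s - 1),
                Complex.Gamma (((c : ℂ) + τ * Complex.I) + (ν ((l : ℕ) + 2) : ℂ))) *
              (y : ℂ) ^ (-((c : ℂ) + τ * Complex.I))) := by
        rw [Finset.mul_sum]
        refine Finset.sum_congr rfl (fun j _ => ?_)
        rw [MeasureTheory.integral_const_mul]
        ring
    _ = (1 / (2 * (Real.pi : ℂ))) * ∫ τ : ℝ, ∑ j ∈ Finset.range (p + 1),
          ((poch (-(p : ℝ)) j / (poch ((ν 1 : ℝ) + 1) j * (Nat.factorial j : ℝ))) : ℂ) *
            (Complex.Gamma (((c : ℂ) + τ * Complex.I) + (ν 1 : ℂ) + (j : ℂ)) *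
              (∏ l : Fin (s - 1),
                Complex.Gamma (((c : ℂ) + τ * Complex.I) + (ν ((l : ℕ) + 2) : ℂ))) *
              (y : ℂ) ^ (-((c : ℂ) + τ * Complex.I))) := by
        rw [← MeasureTheory.integral_finset_sum]
        intro j hj
        exact (hInt j (Nat.lt_succ_iff.mp (Finset.mem_range.mp hj))).const_mul _
    _ = (1 / (2 * (Real.pi : ℂ))) * ∫ τ : ℝ,
          (((-1 : ℝ) ^ p * Real.Gamma (1 + (ν 1 : ℝ)) / Real.Gamma (1 + (ν 1 : ℝ) + p)) : ℂ) *
            G' τ := by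
        congr 1
        exact congrArg _ (funext hpt)
    _ = (((-1 : ℝ) ^ p * Real.Gamma (1 + (ν 1 : ℝ)) / Real.Gamma (1 + (ν 1 : ℝ) + p)) : ℂ) *
          ((1 / (2 * (Real.pi : ℂ))) * ∫ τ : ℝ, G' τ) := by
        rw [MeasureTheory.integral_const_mul]
        ring
    _ = (((-1 : ℝ) ^ p * Real.Gamma (1 + (ν 1 : ℝ)) / Real.Gamma (1 + (ν 1 : ℝ) + p)) : ℂ) *
          ((1 / (2 * (Real.pi : ℂ))) *
            ∫ τ : ℝ,
              Complex.Gamma ((c : ℂ) + τ * Complex.I) *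
                  Complex.Gamma (((c : ℂ) + τ * Complex.I) + (ν 1 : ℂ)) *
                  (∏ l : Fin (s - 1),
                    Complex.Gamma (((c : ℂ) + τ * Complex.I) + (ν ((l : ℕ) + 2) : ℂ))) /
                  Complex.Gamma (((c : ℂ) + τ * Complex.I) - (p : ℂ)) *
                (y : ℂ) ^ (-((c : ℂ) + τ * Complex.I))) := by
        rw [MeasureTheory.integral_congr_ae hae]
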